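/- For every k ∈ {1, …, A₁/aₙ − 1}, the Apéry sets satisfy #S_{kaₙ} ≤ #S_{kaₙ+1}. -/

import Mathlib

/-- A numerical semigroup: an additive submonoid of ℕ with finite complement. -/
def IsNumericalSemigroup (Γ : Set ℕ) : Prop :=
  0 ∈ Γ ∧ (∀ x ∈ Γ, ∀ y ∈ Γ, x + y ∈ Γ) ∧ Γᶜ.Finite

/-- The Apéry set Ap(Γ,x) = {s ∈ Γ : s - x ∉ Γ}. -/
def Ap (Γ : Set ℕ) (x : ℕ) : Set ℕ := {s ∈ Γ | ∀ t ∈ Γ, s ≠ t + x}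

/-- The inductive numerical semigroups Γ₀ = ℕ, Γᵢ = aᵢ·Γ_{i-1} ∪ (aᵢbᵢ + ℕ). -/
def IndSG (a b : ℕ → ℕ) : ℕ → Set ℕ
  | 0 => Set.univ
  | i + 1 => (fun x => a (i + 1) * x) '' IndSG a b i ∪ {x | a (i + 1) * b (i + 1) ≤ x}

open Classical in
lemma apery_ncard (Γ : Set ℕ) (N : ℕ) (hN : ∀ m, N ≤ m → m ∈ Γ) (x : ℕ) :
    (Ap Γ x).ncard = x + (((fun t => t + x) '' Γ) \ Γ).ncard := by
  classical
  set U : Set ℕ := (fun t => t + x) '' Γ with hU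
  set M := N + x with hM
  set SG : Finset ℕ := (Finset.range M).filter (· ∈ Γ) with hSG
  set SU : Finset ℕ := (Finset.range M).filter (· ∈ U) with hSU
  have hApEq : Ap Γ x = Γ \ U := by
    ext s
    simp only [Ap, Set.mem_setOf_eq, Set.mem_diff, hU, Set.mem_image]
    constructor
    · rintro ⟨hs, h⟩
      exact ⟨hs, fun ⟨t, ht, hts⟩ => h t ht hts.symm⟩
    · rintro ⟨hs, h⟩
      exact ⟨hs, fun t ht hst => h ⟨t, ht, hst.symm⟩⟩
  have h1 : Γ \ U = ↑(SG \ SU) := by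
    ext s
    simp only [Set.mem_diff, Finset.coe_sdiff, Set.mem_diff, Finset.mem_coe,
      hSG, hSU, Finset.mem_filter, Finset.mem_range]
    constructor
    · rintro ⟨hs, hsu⟩
      have hsM : s < M := by
        by_contra h
        push_neg at h
        exact hsu ⟨s - x, hN _ (by omega), by simp; omega⟩
      exact ⟨⟨hsM, hs⟩, fun h => hsu h.2⟩
    · rintro ⟨⟨hsM, hs⟩, hsu⟩
      exact ⟨hs, fun h => hsu ⟨hsM, h⟩⟩
  have h2 : U \ Γ = ↑(SU \ SG) := by
    ext s
    simp only [Set.mem_diff, Finset.coe_sdiff, Finset.mem_coe,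
      hSG, hSU, Finset.mem_filter, Finset.mem_range]
    constructor
    · rintro ⟨hs, hsg⟩
      have hsM : s < M := by
        by_contra h
        push_neg at h
        exact hsg (hN s (by omega))
      exact ⟨⟨hsM, hs⟩, fun h => hsg h.2⟩
    · rintro ⟨⟨hsM, hs⟩, hsg⟩
      exact ⟨hs, fun h => hsg ⟨hsM, h⟩⟩
  have hSUim : SU = ((Finset.range N).filter (· ∈ Γ)).image (· + x) := by
    ext s
    simp only [hSU, hU, Finset.mem_filter, Finset.mem_range, Finset.mem_image,
      Set.mem_image]
    constructor
    · rintro ⟨hsM, t, ht, hts⟩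
      exact ⟨t, ⟨by omega, ht⟩, hts⟩
    · rintro ⟨t, ⟨htN, ht⟩, hts⟩
      exact ⟨by omega, t, ht, hts⟩
  have hSGsplit : SG = ((Finset.range N).filter (· ∈ Γ)) ∪ Finset.Ico N M := by
    ext s
    simp only [hSG, Finset.mem_filter, Finset.mem_range, Finset.mem_union, Finset.mem_Ico]
    constructor
    · rintro ⟨hsM, hs⟩
      by_cases hsN : s < N
      · exact Or.inl ⟨hsN, hs⟩
      · exact Or.inr ⟨by omega, hsM⟩
    · rintro (⟨hsN, hs⟩ | ⟨hsN, hsM⟩)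
      · exact ⟨by omega, hs⟩
      · exact ⟨hsM, hN s hsN⟩
  have hdisj : Disjoint ((Finset.range N).filter (· ∈ Γ)) (Finset.Ico N M) := by
    rw [Finset.disjoint_left]
    intro s hs hs'
    simp only [Finset.mem_filter, Finset.mem_range] at hs
    simp only [Finset.mem_Ico] at hs'
    omega
  have hSGcard : SG.card = SU.card + x := by
    rw [hSGsplit, Finset.card_union_of_disjoint hdisj, hSUim,
      Finset.card_image_of_injective _ (add_left_injective x), Nat.card_Ico]
    omega
  have f1 : (SG \ SU).card + (SG ∩ SU).card = SG.card := Finset.card_sdiff_add_card_inter _ _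
  have f2 : (SU \ SG).card + (SU ∩ SG).card = SU.card := Finset.card_sdiff_add_card_inter _ _
  have hic : (SG ∩ SU).card = (SU ∩ SG).card := by rw [Finset.inter_comm]
  have e1 : (Ap Γ x).ncard = (SG \ SU).card := by rw [hApEq, h1, Set.ncard_coe_finset]
  have e2 : (U \ Γ).ncard = (SU \ SG).card := by rw [h2, Set.ncard_coe_finset]
  omega

/-- `∏ i in Icc 1 (n-1), a i` is `A₁ / aₙ`. -/
theorem stmt3 (n : ℕ) (hn : 1 ≤ n) (a b : ℕ → ℕ)
    (ha : ∀ i, 1 ≤ i → i ≤ n → 2 ≤ a i)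
    (hb1 : 1 ≤ b 1)
    (hb : ∀ i, 1 ≤ i → i + 1 ≤ n → a i * b i ≤ b (i + 1))
    (k : ℕ) (hk1 : 1 ≤ k) (hk2 : k ≤ (∏ i ∈ Finset.Icc 1 (n - 1), a i) - 1) :
    (Ap (IndSG a b n) (k * a n)).ncard ≤ (Ap (IndSG a b n) (k * a n + 1)).ncard := by
  obtain ⟨m, rfl⟩ : ∃ m, n = m + 1 := ⟨n - 1, by omega⟩
  set A := a (m + 1) with hAdef
  set B := b (m + 1) with hBdef
  set Λ := IndSG a b m with hΛdef
  set Γ := IndSG a b (m + 1) with hΓdef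
  have hΓ : Γ = (fun x => A * x) '' Λ ∪ {x | A * B ≤ x} := rfl
  have hN : ∀ s, A * B ≤ s → s ∈ Γ := fun s hs => by rw [hΓ]; exact Or.inr hs
  have hA : 2 ≤ A := ha (m + 1) (by omega) le_rfl
  rw [apery_ncard Γ (A * B) hN, apery_ncard Γ (A * B) hN]
  have key : (fun s => s + 1) '' (((fun t => t + k * A) '' Γ) \ Γ)
      ⊆ ((fun t => t + (k * A + 1)) '' Γ) \ Γ := by
    rintro s ⟨g, ⟨⟨t, htΓ, rfl⟩, hgΓ⟩, rfl⟩
    simp only at hgΓ ⊢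
    have hgB : t + k * A < A * B := by
      by_contra h
      push_neg at h
      exact hgΓ (hN _ h)
    have htIm : t ∈ (fun x => A * x) '' Λ := by
      rw [hΓ] at htΓ
      rcases htΓ with h | h
      · exact h
      · exact absurd h (by simp only [Set.mem_setOf_eq] at *; omega)
    obtain ⟨l, hl, rfl⟩ := htIm
    simp only at hgΓ hgB ⊢
    constructor
    · refine ⟨A * l, ?_, by ring⟩
      rw [hΓ]; exact Or.inl ⟨l, hl, rfl⟩
    · intro hmem
      rw [hΓ] at hmem
      rcases hmem with h | h
      · obtain ⟨u, hu, huv⟩ := h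
        simp only at huv
        have h1 : A ∣ A * l + k * A + 1 := huv ▸ Dvd.intro u rfl
        have h2 : A ∣ A * l + k * A := ⟨l + k, by ring⟩
        have h3 : A ∣ 1 := (Nat.dvd_add_right h2).mp h1
        have := Nat.le_of_dvd one_pos h3
        omega
      · simp only [Set.mem_setOf_eq] at h
        have e : A * (l + k) = A * l + k * A := by ring
        have hlt : A * (l + k) < A * B := by omega
        have hlk : l + k < B := Nat.lt_of_mul_lt_mul_left hlt
        have h4 : A * (l + k + 1) ≤ A * B := Nat.mul_le_mul_left A (by omega)
        have h5 : A * (l + k + 1) = A * (l + k) + A := by ring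
        omega
  have hfin : (((fun t => t + (k * A + 1)) '' Γ) \ Γ).Finite := by
    apply Set.Finite.subset (Set.finite_Iio (A * B))
    rintro s ⟨-, hs⟩
    by_contra h
    simp only [Set.mem_Iio, not_lt] at h
    exact hs (hN s h)
  have hinj : Function.Injective (fun s : ℕ => s + 1) := add_left_injective 1
  have hle := Set.ncard_le_ncard key hfin
  rw [Set.ncard_image_of_injective _ hinj] at hle
  omega
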